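/- Existence of a locally correct path in a grid: for every function G : {0,...,m} × {0,...,n} → ℝ≥0, there exists a monotone path π from (0,0) to (m,n) such that for all indices t₁ ≤ t₂ along π, max_{t₁ ≤ t ≤ t₂} G(π(t)) equals the minimum over all monotone paths π' from π(t₁) to π(t₂) of max over nodes of π' of G. -/

import Mathlib

def IsStep (u v : ℕ × ℕ) : Prop :=
  (v.1 = u.1 + 1 ∧ v.2 = u.2) ∨ (v.1 = u.1 ∧ v.2 = u.2 + 1) ∨
    (v.1 = u.1 + 1 ∧ v.2 = u.2 + 1)

def IsGridPath (π : ℕ → ℕ × ℕ) (k : ℕ) (u v : ℕ × ℕ) : Prop :=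
  1 ≤ k ∧ π 0 = u ∧ π (k - 1) = v ∧ ∀ i, i + 1 < k → IsStep (π i) (π (i + 1))

namespace LCGPaux

lemma step_bounds {u v : ℕ × ℕ} (h : IsStep u v) :
    u.1 ≤ v.1 ∧ u.2 ≤ v.2 ∧ u.1 + u.2 + 1 ≤ v.1 + v.2 := by
  rcases h with ⟨h1, h2⟩ | ⟨h1, h2⟩ | ⟨h1, h2⟩ <;> omega

lemma path_mono {π : ℕ → ℕ × ℕ} {k : ℕ} {u v : ℕ × ℕ} (h : IsGridPath π k u v)
    {i j : ℕ} (hij : i ≤ j) (hj : j < k) :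
    (π i).1 ≤ (π j).1 ∧ (π i).2 ≤ (π j).2 ∧
      (π i).1 + (π i).2 + (j - i) ≤ (π j).1 + (π j).2 := by
  obtain ⟨-, -, -, hstep⟩ := h
  induction j with
  | zero =>
      have : i = 0 := by omega
      subst this; omega
  | succ j ih =>
      rcases Nat.lt_or_ge i (j + 1) with hlt | hge
      · have h1 := ih (by omega) (by omega)
        have h2 := step_bounds (hstep j hj)
        omega
      · have : i = j + 1 := by omega
        subst this; omega

lemma in_box {m n : ℕ} {π : ℕ → ℕ × ℕ} {k : ℕ}
    (h : IsGridPath π k ((0 : ℕ), (0 : ℕ)) (m, n)) {i : ℕ} (hi : i < k) :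
    π i ∈ Finset.range (m + 1) ×ˢ Finset.range (n + 1) := by
  have hk := h.1
  have h2 := path_mono h (show i ≤ k - 1 by omega) (by omega)
  rw [h.2.2.1] at h2
  simp only [Finset.mem_product, Finset.mem_range]
  simp only [Prod.fst, Prod.snd] at h2
  omega

lemma subpath {π : ℕ → ℕ × ℕ} {k : ℕ} {u v : ℕ × ℕ} (h : IsGridPath π k u v)
    {t₁ t₂ : ℕ} (h12 : t₁ ≤ t₂) (h2 : t₂ < k) :
    IsGridPath (fun s => π (t₁ + s)) (t₂ - t₁ + 1) (π t₁) (π t₂) := by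
  refine ⟨by omega, by simp, ?_, ?_⟩
  · show π (t₁ + (t₂ - t₁ + 1 - 1)) = π t₂
    congr 1; omega
  · intro i hi
    show IsStep (π (t₁ + i)) (π (t₁ + (i + 1)))
    have he : t₁ + (i + 1) = (t₁ + i) + 1 := by omega
    rw [he]
    exact h.2.2.2 (t₁ + i) (by omega)

lemma straight (m n : ℕ) :
    IsGridPath (fun i => if i ≤ m then (i, 0) else (m, i - m)) (m + n + 1)
      ((0 : ℕ), (0 : ℕ)) (m, n) := by
  refine ⟨by omega, by simp, ?_, ?_⟩
  · show (if m + n + 1 - 1 ≤ m then (m + n + 1 - 1, 0) else (m, m + n + 1 - 1 - m)) = (m, n)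
    by_cases h : m + n + 1 - 1 ≤ m
    · rw [if_pos h]
      have h1 : m + n + 1 - 1 = m := by omega
      have h2 : n = 0 := by omega
      rw [h1, h2]
    · rw [if_neg h]
      have h1 : m + n + 1 - 1 - m = n := by omega
      rw [h1]
  · intro i hi
    show IsStep (if i ≤ m then (i, 0) else (m, i - m))
      (if i + 1 ≤ m then (i + 1, 0) else (m, i + 1 - m))
    by_cases h1 : i + 1 ≤ m
    · rw [if_pos (by omega : i ≤ m), if_pos h1]
      exact Or.inl ⟨rfl, rfl⟩
    · by_cases h2 : i ≤ m
      · rw [if_pos h2, if_neg h1]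
        have he : i = m := by omega
        subst he
        refine Or.inr (Or.inl ⟨rfl, ?_⟩)
        show i + 1 - i = 0 + 1
        omega
      · rw [if_neg h2, if_neg h1]
        refine Or.inr (Or.inl ⟨rfl, ?_⟩)
        show i + 1 - m = (i - m) + 1
        omega

lemma splice {π π' : ℕ → ℕ × ℕ} {k k' t₁ t₂ : ℕ} {u v : ℕ × ℕ}
    (h : IsGridPath π k u v) (h12 : t₁ ≤ t₂) (h2k : t₂ < k)
    (h' : IsGridPath π' k' (π t₁) (π t₂)) :
    IsGridPath (fun i => if i < t₁ then π i else if i < t₁ + k' then π' (i - t₁)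
      else π (i - (t₁ + k') + (t₂ + 1))) (t₁ + k' + (k - 1 - t₂)) u v := by
  have hk1 : 1 ≤ k' := h'.1
  have hk : 1 ≤ k := h.1
  refine ⟨by omega, ?_, ?_, ?_⟩
  · show (if 0 < t₁ then π 0 else if 0 < t₁ + k' then π' (0 - t₁)
      else π (0 - (t₁ + k') + (t₂ + 1))) = u
    by_cases c1 : 0 < t₁
    · rw [if_pos c1]; exact h.2.1
    · rw [if_neg c1, if_pos (by omega : 0 < t₁ + k')]
      have ht : t₁ = 0 := by omega
      show π' (0 - t₁) = u
      rw [(by omega : 0 - t₁ = 0), h'.2.1, ht, h.2.1]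
  · set N := t₁ + k' + (k - 1 - t₂) - 1 with hN
    show (if N < t₁ then π N else if N < t₁ + k' then π' (N - t₁)
      else π (N - (t₁ + k') + (t₂ + 1))) = v
    by_cases hlast : t₂ + 1 < k
    · rw [if_neg (by omega : ¬ N < t₁), if_neg (by omega : ¬ N < t₁ + k')]
      rw [(by omega : N - (t₁ + k') + (t₂ + 1) = k - 1)]
      exact h.2.2.1
    · rw [if_neg (by omega : ¬ N < t₁), if_pos (by omega : N < t₁ + k')]
      rw [(by omega : N - t₁ = k' - 1), h'.2.2.1,
        (by omega : t₂ = k - 1)]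
      exact h.2.2.1
  · intro i hi
    show IsStep
      (if i < t₁ then π i else if i < t₁ + k' then π' (i - t₁)
        else π (i - (t₁ + k') + (t₂ + 1)))
      (if i + 1 < t₁ then π (i + 1) else if i + 1 < t₁ + k' then π' (i + 1 - t₁)
        else π (i + 1 - (t₁ + k') + (t₂ + 1)))
    by_cases c1 : i + 1 < t₁
    · rw [if_pos (by omega : i < t₁), if_pos c1]
      exact h.2.2.2 i (by omega)
    · by_cases c2 : i + 1 = t₁
      · rw [if_pos (by omega : i < t₁), if_neg (by omega : ¬ i + 1 < t₁),
          if_pos (by omega : i + 1 < t₁ + k'),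
          (by omega : i + 1 - t₁ = 0), h'.2.1, ← c2]
        exact h.2.2.2 i (by omega)
      · by_cases c3 : i + 1 < t₁ + k'
        · rw [if_neg (by omega : ¬ i < t₁), if_pos (by omega : i < t₁ + k'),
            if_neg (by omega : ¬ i + 1 < t₁), if_pos c3,
            (by omega : i + 1 - t₁ = (i - t₁) + 1)]
          exact h'.2.2.2 (i - t₁) (by omega)
        · by_cases c4 : i + 1 = t₁ + k'
          · rw [if_neg (by omega : ¬ i < t₁), if_pos (by omega : i < t₁ + k'),
              if_neg (by omega : ¬ i + 1 < t₁), if_neg (by omega : ¬ i + 1 < t₁ + k'),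
              (by omega : i + 1 - (t₁ + k') + (t₂ + 1) = t₂ + 1),
              (by omega : i - t₁ = k' - 1), h'.2.2.1]
            exact h.2.2.2 t₂ (by omega)
          · rw [if_neg (by omega : ¬ i < t₁), if_neg (by omega : ¬ i < t₁ + k'),
              if_neg (by omega : ¬ i + 1 < t₁), if_neg (by omega : ¬ i + 1 < t₁ + k'),
              (by omega : i + 1 - (t₁ + k') + (t₂ + 1) = (i - (t₁ + k') + (t₂ + 1)) + 1)]
            exact h.2.2.2 _ (by omega)

lemma sup_shift (G : ℕ × ℕ → NNReal) (π : ℕ → ℕ × ℕ) (t₁ t₂ : ℕ) (h12 : t₁ ≤ t₂) :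
    Finset.sup (Finset.Icc 0 (t₂ - t₁ + 1 - 1)) (fun s => G (π (t₁ + s)))
      = Finset.sup (Finset.Icc t₁ t₂) (fun t => G (π t)) := by
  apply le_antisymm
  · apply Finset.sup_le
    intro s hs
    simp only [Finset.mem_Icc] at hs
    exact Finset.le_sup (f := fun t => G (π t))
      (by simp only [Finset.mem_Icc]; omega)
  · apply Finset.sup_le
    intro t ht
    simp only [Finset.mem_Icc] at ht
    have he : t = t₁ + (t - t₁) := by omega
    rw [he]
    exact Finset.le_sup (f := fun s => G (π (t₁ + s)))
      (by simp only [Finset.mem_Icc]; omega)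

noncomputable def wt (m n : ℕ) (G : ℕ × ℕ → NNReal) (x : NNReal) : ℕ :=
  (m + n + 2) ^
    (((Finset.range (m + 1) ×ˢ Finset.range (n + 1)).image G).filter (fun y => y ≤ x)).card

lemma wt_pos (m n : ℕ) (G : ℕ × ℕ → NNReal) (x : NNReal) : 0 < wt m n G x :=
  Nat.pow_pos (by omega)

lemma wt_mono (m n : ℕ) (G : ℕ × ℕ → NNReal) {x y : NNReal} (h : x ≤ y) :
    wt m n G x ≤ wt m n G y := by
  apply Nat.pow_le_pow_right (by omega)
  apply Finset.card_le_card
  intro z hz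
  simp only [Finset.mem_filter] at hz ⊢
  exact ⟨hz.1, hz.2.trans h⟩

lemma wt_lt (m n : ℕ) (G : ℕ × ℕ → NNReal) {x y : NNReal} (h : x < y)
    (hy : y ∈ (Finset.range (m + 1) ×ˢ Finset.range (n + 1)).image G) :
    (m + n + 2) * wt m n G x ≤ wt m n G y := by
  unfold wt
  rw [← pow_succ']
  apply Nat.pow_le_pow_right (by omega)
  apply Nat.succ_le_of_lt
  apply Finset.card_lt_card
  constructor
  · intro z hz
    simp only [Finset.mem_filter] at hz ⊢
    exact ⟨hz.1, hz.2.trans h.le⟩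
  · intro hcon
    have : y ∈ (((Finset.range (m + 1) ×ˢ Finset.range (n + 1)).image G).filter
        (fun z => z ≤ x)) := hcon (by simp only [Finset.mem_filter]; exact ⟨hy, le_refl y⟩)
    simp only [Finset.mem_filter] at this
    exact absurd this.2 (not_le.2 h)

noncomputable def Phi (m n : ℕ) (G : ℕ × ℕ → NNReal) (k : ℕ) (π : ℕ → ℕ × ℕ) : ℕ :=
  ∑ i ∈ Finset.range k, wt m n G (G (π i))

lemma sum_splice (F F' : ℕ → ℕ) (t₁ k' k t₂ : ℕ) :
    (∑ i ∈ Finset.range (t₁ + k' + (k - 1 - t₂)),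
        (if i < t₁ then F i else if i < t₁ + k' then F' (i - t₁)
          else F (i - (t₁ + k') + (t₂ + 1))))
      = (∑ i ∈ Finset.Ico 0 t₁, F i) + (∑ s ∈ Finset.range k', F' s)
        + ∑ i ∈ Finset.Ico (t₂ + 1) k, F i := by
  rw [Finset.range_eq_Ico,
    ← Finset.sum_Ico_consecutive _ (by omega : 0 ≤ t₁ + k')
      (by omega : t₁ + k' ≤ t₁ + k' + (k - 1 - t₂)),
    ← Finset.sum_Ico_consecutive _ (by omega : 0 ≤ t₁) (by omega : t₁ ≤ t₁ + k')]
  congr 1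
  · congr 1
    · apply Finset.sum_congr rfl
      intro i hi
      simp only [Finset.mem_Ico] at hi
      rw [if_pos (by omega : i < t₁)]
    · rw [Finset.sum_Ico_eq_sum_range, (by omega : t₁ + k' - t₁ = k')]
      apply Finset.sum_congr rfl
      intro i hi
      simp only [Finset.mem_range] at hi
      rw [if_neg (by omega : ¬ t₁ + i < t₁), if_pos (by omega : t₁ + i < t₁ + k')]
      congr 1
      omega
  · rw [Finset.sum_Ico_eq_sum_range, Finset.sum_Ico_eq_sum_range,
      (by omega : t₁ + k' + (k - 1 - t₂) - (t₁ + k') = k - (t₂ + 1))]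
    apply Finset.sum_congr rfl
    intro i hi
    simp only [Finset.mem_range] at hi
    rw [if_neg (by omega : ¬ t₁ + k' + i < t₁), if_neg (by omega : ¬ t₁ + k' + i < t₁ + k')]
    congr 1
    omega

lemma phi_splice (m n : ℕ) (G : ℕ × ℕ → NNReal) (π π' : ℕ → ℕ × ℕ) (t₁ t₂ k k' : ℕ) :
    Phi m n G (t₁ + k' + (k - 1 - t₂))
        (fun i => if i < t₁ then π i else if i < t₁ + k' then π' (i - t₁)
          else π (i - (t₁ + k') + (t₂ + 1)))
      = (∑ i ∈ Finset.Ico 0 t₁, wt m n G (G (π i)))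
        + (∑ s ∈ Finset.range k', wt m n G (G (π' s)))
        + ∑ i ∈ Finset.Ico (t₂ + 1) k, wt m n G (G (π i)) := by
  rw [← sum_splice (fun i => wt m n G (G (π i))) (fun s => wt m n G (G (π' s))) t₁ k' k t₂]
  simp only [Phi]
  apply Finset.sum_congr rfl
  intro i _
  split_ifs <;> rfl

lemma phi_decomp (m n : ℕ) (G : ℕ × ℕ → NNReal) (π : ℕ → ℕ × ℕ) (t₁ t₂ k : ℕ)
    (h1 : t₁ ≤ t₂ + 1) (h2 : t₂ + 1 ≤ k) :
    Phi m n G k π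
      = (∑ i ∈ Finset.Ico 0 t₁, wt m n G (G (π i)))
        + (∑ i ∈ Finset.Ico t₁ (t₂ + 1), wt m n G (G (π i)))
        + ∑ i ∈ Finset.Ico (t₂ + 1) k, wt m n G (G (π i)) := by
  simp only [Phi]
  rw [Finset.range_eq_Ico, ← Finset.sum_Ico_consecutive _ (Nat.zero_le (t₂ + 1)) h2,
    ← Finset.sum_Ico_consecutive _ (Nat.zero_le t₁) h1]

end LCGPaux

theorem exists_locally_correct_grid_path (m n : ℕ) (G : ℕ × ℕ → NNReal) :
    ∃ (k : ℕ) (π : ℕ → ℕ × ℕ), IsGridPath π k (0, 0) (m, n) ∧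
      ∀ t₁ t₂ : ℕ, t₁ ≤ t₂ → t₂ < k →
        IsLeast {r : NNReal | ∃ (k' : ℕ) (π' : ℕ → ℕ × ℕ),
            IsGridPath π' k' (π t₁) (π t₂) ∧
            r = Finset.sup (Finset.Icc 0 (k' - 1)) (fun s => G (π' s))}
          (Finset.sup (Finset.Icc t₁ t₂) (fun t => G (π t))) := by
  classical
  have hex : ∃ c, ∃ k π, IsGridPath π k ((0 : ℕ), (0 : ℕ)) (m, n)
      ∧ LCGPaux.Phi m n G k π = c :=
    ⟨_, _, _, LCGPaux.straight m n, rfl⟩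
  obtain ⟨k, π, hpath, hΦ⟩ := Nat.find_spec hex
  refine ⟨k, π, hpath, ?_⟩
  intro t₁ t₂ h12 h2k
  constructor
  · exact ⟨t₂ - t₁ + 1, fun s => π (t₁ + s), LCGPaux.subpath hpath h12 h2k,
      (LCGPaux.sup_shift G π t₁ t₂ h12).symm⟩
  · rintro r ⟨k', π', hp', rfl⟩
    by_contra hcon
    have hlt : Finset.sup (Finset.Icc 0 (k' - 1)) (fun s => G (π' s)) <
        Finset.sup (Finset.Icc t₁ t₂) (fun t => G (π t)) := not_le.1 hcon
    set M := Finset.sup (Finset.Icc t₁ t₂) (fun t => G (π t)) with hM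
    set M' := Finset.sup (Finset.Icc 0 (k' - 1)) (fun s => G (π' s)) with hM'
    obtain ⟨t₀, ht₀, hMt₀⟩ := Finset.exists_mem_eq_sup (Finset.Icc t₁ t₂)
      ⟨t₁, by simp only [Finset.mem_Icc]; omega⟩ (fun t => G (π t))
    simp only [Finset.mem_Icc] at ht₀
    rw [← hM] at hMt₀
    have hMS : M ∈ (Finset.range (m + 1) ×ˢ Finset.range (n + 1)).image G := by
      rw [hMt₀]
      exact Finset.mem_image_of_mem G (LCGPaux.in_box hpath (by omega))
    -- length bound on π'
    have hk'1 : 1 ≤ k' := hp'.1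
    have hlen : k' ≤ m + n + 1 := by
      have h1 := LCGPaux.path_mono hp' (Nat.zero_le (k' - 1)) (by omega)
      rw [hp'.2.1, hp'.2.2.1] at h1
      have h2 := LCGPaux.in_box hpath h2k
      simp only [Finset.mem_product, Finset.mem_range] at h2
      omega
    -- sum bounds
    have hB' : (∑ s ∈ Finset.range k', LCGPaux.wt m n G (G (π' s)))
        ≤ k' * LCGPaux.wt m n G M' := by
      have := Finset.sum_le_card_nsmul (Finset.range k')
        (fun s => LCGPaux.wt m n G (G (π' s))) (LCGPaux.wt m n G M')
        (fun s hs => by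
          apply LCGPaux.wt_mono
          apply Finset.le_sup (f := fun s => G (π' s))
          simp only [Finset.mem_range] at hs
          simp only [Finset.mem_Icc]
          omega)
      simpa [Finset.card_range, smul_eq_mul] using this
    have hwtM : (m + n + 2) * LCGPaux.wt m n G M' ≤ LCGPaux.wt m n G M :=
      LCGPaux.wt_lt m n G hlt hMS
    have hwtpos : 0 < LCGPaux.wt m n G M' := LCGPaux.wt_pos m n G M'
    have hMB : LCGPaux.wt m n G M ≤ ∑ i ∈ Finset.Ico t₁ (t₂ + 1), LCGPaux.wt m n G (G (π i)) := by
      rw [hMt₀]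
      exact Finset.single_le_sum (f := fun i => LCGPaux.wt m n G (G (π i)))
        (fun i _ => Nat.zero_le _) (by simp only [Finset.mem_Ico]; omega)
    have hBB : (∑ s ∈ Finset.range k', LCGPaux.wt m n G (G (π' s)))
        < ∑ i ∈ Finset.Ico t₁ (t₂ + 1), LCGPaux.wt m n G (G (π i)) := by
      have h1 : k' * LCGPaux.wt m n G M' < (m + n + 2) * LCGPaux.wt m n G M' := by
        apply Nat.mul_lt_mul_of_lt_of_le (by omega) (le_refl _)
        omega
      omega
    -- splice path gives a smaller Phi, contradiction
    have hsplice := LCGPaux.splice hpath h12 h2k hp'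
    have hle := Nat.find_min' hex ⟨t₁ + k' + (k - 1 - t₂), _, hsplice, rfl⟩
    have e1 := LCGPaux.phi_splice m n G π π' t₁ t₂ k k'
    have e2 := LCGPaux.phi_decomp m n G π t₁ t₂ k (by omega) (by omega)
    omega
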